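/- Reverse triangle inequality for the extended Lorentzian distance: let (qₙ), (q'ₙ) be past chains generating F, F' and (p'ₙ), (p''ₙ) future chains generating P', P''. Assume for each n that p'ₙ ≤ q'ₙ for a compatible causal relation ≤ (so that τ(qₙ,p''ₙ) ≥ τ(qₙ,p'ₙ) + τ(p'ₙ,q'ₙ) + τ(q'ₙ,p''ₙ) holds when the chronological relations hold), and assume F ∩ P' ≠ ∅ and F' ∩ P'' ≠ ∅. Then limₙ τ(qₙ,p''ₙ) ≥ limₙ τ(qₙ,p'ₙ) + limₙ τ(q'ₙ,p''ₙ). -/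

import Mathlib

open Filter Topology Set ENNReal

theorem stmt10 {X : Type*} [TopologicalSpace X] (τ : X → X → ℝ≥0∞)
    (hlsc : LowerSemicontinuous fun p : X × X => τ p.1 p.2)
    (hrev : ∀ x y z : X, 0 < τ x y → 0 < τ y z → τ x y + τ y z ≤ τ x z)
    (le : X → X → Prop) (hrefl : ∀ x, le x x)
    (htrans : ∀ x y z, le x y → le y z → le x z)
    (hcont : ∀ x y, 0 < τ x y → le x y)
    (hrevle : ∀ x y z, le x y → le y z → τ x y + τ y z ≤ τ x z)
    (q q' p' p'' : ℕ → X)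
    (hq : ∀ n, 0 < τ (q (n + 1)) (q n)) (hq' : ∀ n, 0 < τ (q' (n + 1)) (q' n))
    (hp' : ∀ n, 0 < τ (p' n) (p' (n + 1))) (hp'' : ∀ n, 0 < τ (p'' n) (p'' (n + 1)))
    (hmid : ∀ n, le (p' n) (q' n))
    (hFP' : ({z | ∃ n, 0 < τ (q n) z} ∩ {z | ∃ n, 0 < τ z (p' n)}).Nonempty)
    (hF'P'' : ({z | ∃ n, 0 < τ (q' n) z} ∩ {z | ∃ n, 0 < τ z (p'' n)}).Nonempty)
    (l₁ l₂ l₃ : ℝ≥0∞)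
    (h₁ : Tendsto (fun n => τ (q n) (p'' n)) atTop (𝓝 l₁))
    (h₂ : Tendsto (fun n => τ (q n) (p' n)) atTop (𝓝 l₂))
    (h₃ : Tendsto (fun n => τ (q' n) (p'' n)) atTop (𝓝 l₃)) :
    l₂ + l₃ ≤ l₁ := by
  -- monotonicity of chains in the causal order
  have hqmono : ∀ m n : ℕ, m ≤ n → le (q n) (q m) := by
    intro m n h
    induction n with
    | zero => cases Nat.le_zero.mp h; exact hrefl _
    | succ k ih =>
      rcases Nat.lt_or_ge m (k+1) with h' | h'
      · exact htrans _ _ _ (hcont _ _ (hq k)) (ih (Nat.lt_succ_iff.mp h'))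
      · have : m = k + 1 := le_antisymm h h'
        subst this; exact hrefl _
  have hq'mono : ∀ m n : ℕ, m ≤ n → le (q' n) (q' m) := by
    intro m n h
    induction n with
    | zero => cases Nat.le_zero.mp h; exact hrefl _
    | succ k ih =>
      rcases Nat.lt_or_ge m (k+1) with h' | h'
      · exact htrans _ _ _ (hcont _ _ (hq' k)) (ih (Nat.lt_succ_iff.mp h'))
      · have : m = k + 1 := le_antisymm h h'
        subst this; exact hrefl _
  have hp'mono : ∀ m n : ℕ, m ≤ n → le (p' m) (p' n) := by
    intro m n h
    induction n with
    | zero => cases Nat.le_zero.mp h; exact hrefl _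
    | succ k ih =>
      rcases Nat.lt_or_ge m (k+1) with h' | h'
      · exact htrans _ _ _ (ih (Nat.lt_succ_iff.mp h')) (hcont _ _ (hp' k))
      · have : m = k + 1 := le_antisymm h h'
        subst this; exact hrefl _
  have hp''mono : ∀ m n : ℕ, m ≤ n → le (p'' m) (p'' n) := by
    intro m n h
    induction n with
    | zero => cases Nat.le_zero.mp h; exact hrefl _
    | succ k ih =>
      rcases Nat.lt_or_ge m (k+1) with h' | h'
      · exact htrans _ _ _ (ih (Nat.lt_succ_iff.mp h')) (hcont _ _ (hp'' k))
      · have : m = k + 1 := le_antisymm h h'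
        subst this; exact hrefl _
  obtain ⟨z, ⟨m₁, hz₁⟩, ⟨m₂, hz₂⟩⟩ := hFP'
  obtain ⟨w, ⟨m₃, hw₁⟩, ⟨m₄, hw₂⟩⟩ := hF'P''
  set N := max (max m₁ m₂) (max m₃ m₄) with hN
  have key : ∀ n, N ≤ n → τ (q n) (p' n) + τ (q' n) (p'' n) ≤ τ (q n) (p'' n) := by
    intro n hn
    have h1 : le (q n) (p' n) := by
      refine htrans _ _ _ (hqmono m₁ n ?_) (htrans _ _ _ (hcont _ _ hz₁)
        (htrans _ _ _ (hcont _ _ hz₂) (hp'mono m₂ n ?_)))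
      · exact le_trans (le_trans (le_max_left _ _) (le_max_left _ _)) hn
      · exact le_trans (le_trans (le_max_right _ _) (le_max_left _ _)) hn
    have h2 : le (q' n) (p'' n) := by
      refine htrans _ _ _ (hq'mono m₃ n ?_) (htrans _ _ _ (hcont _ _ hw₁)
        (htrans _ _ _ (hcont _ _ hw₂) (hp''mono m₄ n ?_)))
      · exact le_trans (le_trans (le_max_left _ _) (le_max_right _ _)) hn
      · exact le_trans (le_trans (le_max_right _ _) (le_max_right _ _)) hn
    have A : τ (q n) (p' n) + τ (p' n) (q' n) ≤ τ (q n) (q' n) :=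
      hrevle _ _ _ h1 (hmid n)
    have B : τ (q n) (q' n) + τ (q' n) (p'' n) ≤ τ (q n) (p'' n) :=
      hrevle _ _ _ (htrans _ _ _ h1 (hmid n)) h2
    calc τ (q n) (p' n) + τ (q' n) (p'' n)
        ≤ τ (q n) (q' n) + τ (q' n) (p'' n) := by
          exact add_le_add_left (le_trans (le_add_right le_rfl) A) _
      _ ≤ τ (q n) (p'' n) := B
  have := le_of_tendsto_of_tendsto (h₂.add h₃) h₁
    (eventually_atTop.mpr ⟨N, key⟩)
  exact this
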